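/- Let F : [0,∞) → ℝ be convex and increasing with F(0) = 0, and let f : [a,b] → ℝ be absolutely continuous with f(a) = 0. Then ∫ₐᵇ F'(|f(x)|) |f'(x)| dx ≤ F(∫ₐᵇ |f'(x)| dx). -/

import Mathlib

open MeasureTheory Set Filter Topology

lemma GL.ae_hasDerivAt_primitive (a : ℝ) {φ : ℝ → ℝ} (hφ : MeasureTheory.Integrable φ) :
    ∀ᵐ x, HasDerivAt (fun y => ∫ t in a..y, φ t) (φ x) x := by
  set G : ℝ → ℝ := fun y => ∫ t in a..y, φ t with hG
  have hii : ∀ u v : ℝ, IntervalIntegrable φ volume u v := fun u v => hφ.intervalIntegrable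
  have hsub : ∀ u v : ℝ, G v - G u = ∫ t in u..v, φ t := by
    intro u v
    rw [hG]
    exact intervalIntegral.integral_interval_sub_left (hii a v) (hii a u)
  filter_upwards [(IsUnifLocDoublingMeasure.vitaliFamily (volume : Measure ℝ) 1).ae_tendsto_average
      hφ.locallyIntegrable] with x hx
  have havg : ∀ u v : ℝ, u < v → ⨍ y in Icc u v, φ y = (v - u)⁻¹ * ∫ t in u..v, φ t := by
    intro u v huv
    rw [setAverage_eq, Real.volume_real_Icc, max_eq_left (sub_nonneg.2 huv.le),
      integral_Icc_eq_integral_Ioc, ← intervalIntegral.integral_of_le huv.le, smul_eq_mul]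
  have L1 : Tendsto (slope G x) (𝓝[>] x) (𝓝 (φ x)) := by
    apply Tendsto.congr' _ (hx.comp (Real.tendsto_Icc_vitaliFamily_right x))
    filter_upwards [self_mem_nhdsWithin] with y (hy : x < y)
    simp only [Function.comp_apply, havg x y hy, slope_def_field, div_eq_inv_mul, hsub x y]
  have L2 : Tendsto (slope G x) (𝓝[<] x) (𝓝 (φ x)) := by
    apply Tendsto.congr' _ (hx.comp (Real.tendsto_Icc_vitaliFamily_left x))
    filter_upwards [self_mem_nhdsWithin] with y (hy : y < x)
    simp only [Function.comp_apply, havg y x hy, slope_comm G x y, slope_def_field,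
      div_eq_inv_mul, hsub y x]
  rw [hasDerivAt_iff_tendsto_slope, ← nhdsLT_sup_nhdsGT, tendsto_sup]
  exact ⟨L2, L1⟩

lemma GL.countable_isolated (S : Set ℝ) :
    Set.Countable {x | x ∈ S ∧ 𝓝[S \ {x}] x = ⊥} := by
  have key : {x | x ∈ S ∧ 𝓝[S \ {x}] x = ⊥} ⊆
      ⋃ p : ℚ × ℚ, {x | x ∈ S ∧ x ∈ Ioo (p.1 : ℝ) p.2 ∧ S ∩ Ioo (p.1 : ℝ) p.2 ⊆ {x}} := by
    rintro x ⟨hxS, hbot⟩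
    have hemp : (∅ : Set ℝ) ∈ 𝓝[S \ {x}] x := by rw [hbot]; exact mem_bot
    rw [mem_nhdsWithin] at hemp
    obtain ⟨U, hUopen, hxU, hU⟩ := hemp
    obtain ⟨ε, hε, hball⟩ := Metric.isOpen_iff.1 hUopen x hxU
    obtain ⟨q, hq1, hq2⟩ := exists_rat_btwn (show x - ε < x by linarith)
    obtain ⟨r, hr1, hr2⟩ := exists_rat_btwn (show x < x + ε by linarith)
    refine mem_iUnion.2 ⟨(q, r), hxS, ⟨hq2, hr1⟩, ?_⟩
    rintro y ⟨hyS, hy1, hy2⟩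
    by_contra hyx
    have hyU : y ∈ U := by
      apply hball
      rw [Metric.mem_ball, Real.dist_eq, abs_sub_lt_iff]
      constructor <;> [skip; skip] <;> simp only at hy1 hy2 <;> nlinarith [hy1, hy2]
    exact (hU ⟨hyU, hyS, hyx⟩ : y ∈ (∅ : Set ℝ))
  refine Set.Countable.mono key (Set.countable_iUnion fun p => ?_)
  apply Set.Subsingleton.countable
  rintro y ⟨hyS, hy, hsub⟩ z ⟨hzS, hz, hsub'⟩
  have := hsub' ⟨hyS, hy⟩
  have := hsub ⟨hzS, hz⟩
  simp_all

lemma GL.monotone_ftc {h : ℝ → ℝ} (hm : Monotone h) (a b : ℝ) (hab : a ≤ b) :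
    IntegrableOn (fun x => (Measure.rnDeriv hm.stieltjesFunction.measure volume x).toReal)
      (Ioo a b) ∧
    ∫ x in Ioo a b, (Measure.rnDeriv hm.stieltjesFunction.measure volume x).toReal ≤
      h b - h a := by
  set μ := hm.stieltjesFunction.measure with hμ
  set d : ℝ → ℝ := fun x => (Measure.rnDeriv μ volume x).toReal with hd
  have hmeas : Measurable d := (Measure.measurable_rnDeriv μ volume).ennreal_toReal
  have key : ∫⁻ x in Ioo a b, Measure.rnDeriv μ volume x ≤ μ (Ioo a b) := by
    rw [← withDensity_apply _ measurableSet_Ioo]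
    exact Measure.withDensity_rnDeriv_le μ volume _
  have hIoo : μ (Ioo a b) < ⊤ := by
    rw [hμ, StieltjesFunction.measure_Ioo]
    exact ENNReal.ofReal_lt_top
  have hbound : μ (Ioo a b) ≤ ENNReal.ofReal (h b - h a) := by
    rw [hμ, StieltjesFunction.measure_Ioo]
    apply ENNReal.ofReal_le_ofReal
    have h1 : hm.stieltjesFunction a ≥ h a := by
      rw [hm.stieltjesFunction_eq]
      exact hm.le_rightLim le_rfl
    have h2 : Function.leftLim (hm.stieltjesFunction : ℝ → ℝ) b ≤ h b := by
      apply le_of_tendsto (hm.stieltjesFunction.mono.tendsto_leftLim b)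
      filter_upwards [self_mem_nhdsWithin] with y (hy : y < b)
      rw [hm.stieltjesFunction_eq]
      exact hm.rightLim_le hy
    linarith
  have hfin : ∫⁻ x in Ioo a b, ENNReal.ofReal (d x) < ⊤ := by
    refine lt_of_le_of_lt (lintegral_mono fun x => ?_) (lt_of_le_of_lt key hIoo)
    exact ENNReal.ofReal_toReal_le
  have hint : IntegrableOn d (Ioo a b) := by
    refine ⟨hmeas.aestronglyMeasurable.restrict, ?_⟩
    rw [hasFiniteIntegral_iff_norm]
    refine lt_of_le_of_lt (le_of_eq (lintegral_congr fun x => ?_)) hfin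
    rw [Real.norm_eq_abs, abs_of_nonneg ENNReal.toReal_nonneg]
  refine ⟨hint, ?_⟩
  have : ∫ x in Ioo a b, d x = (∫⁻ x in Ioo a b, ENNReal.ofReal (d x)).toReal := by
    rw [integral_eq_lintegral_of_nonneg_ae (Eventually.of_forall fun x => ENNReal.toReal_nonneg)
      hmeas.aestronglyMeasurable.restrict]
  rw [this]
  calc (∫⁻ x in Ioo a b, ENNReal.ofReal (d x)).toReal
      ≤ (ENNReal.ofReal (h b - h a)).toReal := by
        apply ENNReal.toReal_mono ENNReal.ofReal_ne_top
        refine le_trans (lintegral_mono fun x => ENNReal.ofReal_toReal_le) (le_trans key hbound)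
    _ ≤ h b - h a := by
        rw [ENNReal.toReal_ofReal']
        exact max_le le_rfl (by simpa using hm hab)

/-- Godunova–Levin inequality: if `F` is convex and increasing on `[0,∞)` with `F 0 = 0`,
continuously differentiable on `(0,∞)` with derivative `F'`, and `f` is absolutely
continuous on `[a,b]` with `f a = 0`, then
`∫ₐᵇ F'(|f x|) |f' x| dx ≤ F (∫ₐᵇ |f' x| dx)`. -/
theorem godunova_levin (a b : ℝ) (hab : a < b) (F F' : ℝ → ℝ)
    (hFconv : ConvexOn ℝ (Set.Ici (0 : ℝ)) F)
    (hFmono : MonotoneOn F (Set.Ici (0 : ℝ)))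
    (hF0 : F 0 = 0)
    (hFderiv : ∀ x ∈ Set.Ioi (0 : ℝ), HasDerivAt F (F' x) x)
    (hF'cont : ContinuousOn F' (Set.Ioi (0 : ℝ)))
    (f f' : ℝ → ℝ)
    (hf' : IntervalIntegrable f' MeasureTheory.volume a b)
    (hf : ∀ x ∈ Set.Icc a b, f x = ∫ t in a..x, f' t)
    (hfa : f a = 0) :
    ∫ x in a..b, F' |f x| * |f' x| ≤ F (∫ x in a..b, |f' x|) := by
  have hab' : a ≤ b := hab.le
  have hf'Ioc : IntegrableOn f' (Ioc a b) :=
    (intervalIntegrable_iff_integrableOn_Ioc_of_le hab').1 hf'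
  have hf'Icc : IntegrableOn f' (Icc a b) := (integrableOn_Icc_iff_integrableOn_Ioc enorm_ne_top).2 hf'Ioc
  set ψ : ℝ → ℝ := (Icc a b).indicator (fun t => |f' t|) with hψdef
  have hψnn : ∀ x, 0 ≤ ψ x := fun x => Set.indicator_nonneg (fun t _ => abs_nonneg _) x
  have hψint : Integrable ψ := (integrable_indicator_iff measurableSet_Icc).2 hf'Icc.abs
  set g : ℝ → ℝ := fun y => ∫ t in a..y, ψ t with hgdef
  have hψii : ∀ u v : ℝ, IntervalIntegrable ψ volume u v := fun u v => hψint.intervalIntegrable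
  have hgsub : ∀ u v : ℝ, g v - g u = ∫ t in u..v, ψ t := fun u v =>
    intervalIntegral.integral_interval_sub_left (hψii a v) (hψii a u)
  have hgmono : Monotone g := by
    intro u v huv
    have h1 : (0:ℝ) ≤ ∫ t in u..v, ψ t :=
      intervalIntegral.integral_nonneg (μ := volume) huv (fun x _ => hψnn x)
    have h2 := hgsub u v
    linarith
  have hgeq : ∀ y ∈ Icc a b, g y = ∫ t in a..y, |f' t| := by
    intro y hy
    apply intervalIntegral.integral_congr
    intro t ht
    have hsub : uIcc a y ⊆ Icc a b := by
      rw [uIcc_of_le hy.1]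
      exact Icc_subset_Icc le_rfl hy.2
    exact Set.indicator_of_mem (hsub ht) _
  have hga : g a = 0 := by simp [hgdef]
  have hgb : g b = ∫ x in a..b, |f' x| := hgeq b ⟨hab', le_rfl⟩
  have hgnn : ∀ y, a ≤ y → 0 ≤ g y := fun y hy => hga ▸ hgmono hy
  have hfg : ∀ x ∈ Icc a b, |f x| ≤ g x := by
    intro x hx
    rw [hf x hx, hgeq x hx]
    exact intervalIntegral.abs_integral_le_integral_abs hx.1
  -- facts about F'
  have hF'mono : ∀ u v : ℝ, 0 < u → u ≤ v → F' u ≤ F' v := by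
    intro u v hu huv
    rcases eq_or_lt_of_le huv with rfl | h
    · rfl
    have hv : 0 < v := lt_trans hu h
    calc F' u ≤ slope F u v :=
          hFconv.le_slope_of_hasDerivAt (le_of_lt hu) (le_of_lt hv) h (hFderiv u hu)
      _ ≤ F' v := hFconv.slope_le_of_hasDerivAt (le_of_lt hu) (le_of_lt hv) h (hFderiv v hv)
  have hF'nonneg : ∀ u : ℝ, 0 < u → 0 ≤ F' u := by
    intro u hu
    have h1 : slope F (u/2) u ≤ F' u :=
      hFconv.slope_le_of_hasDerivAt (mem_Ici.2 (by linarith)) (mem_Ici.2 hu.le)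
        (by linarith) (hFderiv u hu)
    have h2 : 0 ≤ slope F (u/2) u := by
      rw [slope_def_field]
      apply div_nonneg _ (by linarith)
      have hmem1 : (u/2 : ℝ) ∈ Ici (0:ℝ) := mem_Ici.2 (by linarith)
      have hmem2 : u ∈ Ici (0:ℝ) := mem_Ici.2 hu.le
      have := hFmono hmem1 hmem2 (by linarith)
      linarith
    linarith
  -- the monotone majorant
  set h : ℝ → ℝ := fun y => F (g (max y a)) with hhdef
  have hhmono : Monotone h := by
    intro u v huv
    exact hFmono (hgnn _ (le_max_right _ _)) (hgnn _ (le_max_right _ _))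
      (hgmono (max_le_max huv le_rfl))
  set d : ℝ → ℝ := fun x => (Measure.rnDeriv hhmono.stieltjesFunction.measure volume x).toReal
    with hddef
  obtain ⟨hdint, hdle⟩ := GL.monotone_ftc hhmono a b hab'
  have hgD := GL.ae_hasDerivAt_primitive a hψint
  have hdD := hhmono.ae_hasDerivAt
  -- a.e. derivative of f on Ioo a b
  set φ : ℝ → ℝ := (Icc a b).indicator f' with hφdef
  have hφint : Integrable φ := (integrable_indicator_iff measurableSet_Icc).2 hf'Icc
  have hfeq : ∀ y ∈ Icc a b, f y = ∫ t in a..y, φ t := by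
    intro y hy
    rw [hf y hy]
    apply intervalIntegral.integral_congr
    intro t ht
    have hsub : uIcc a y ⊆ Icc a b := by
      rw [uIcc_of_le hy.1]
      exact Icc_subset_Icc le_rfl hy.2
    exact (Set.indicator_of_mem (hsub ht) _).symm
  have hfD : ∀ᵐ x, x ∈ Ioo a b → HasDerivAt f (f' x) x := by
    filter_upwards [GL.ae_hasDerivAt_primitive a hφint] with x hx hxm
    have hIccnhds : Icc a b ∈ 𝓝 x := Icc_mem_nhds hxm.1 hxm.2
    have heq : f =ᶠ[𝓝 x] (fun y => ∫ t in a..y, φ t) := by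
      filter_upwards [hIccnhds] with y hy using hfeq y hy
    have h2 : HasDerivAt f (φ x) x := hx.congr_of_eventuallyEq heq
    rwa [hφdef, Set.indicator_of_mem (Ioo_subset_Icc_self hxm)] at h2
  -- level set: f' vanishes a.e. where f vanishes
  set S : Set ℝ := {x | x ∈ Ioo a b ∧ f x = 0} with hSdef
  have hS : ∀ᵐ x, x ∈ Ioo a b → f x = 0 → f' x = 0 := by
    filter_upwards [hfD, (GL.countable_isolated S).ae_notMem volume] with x hder hiso hxm hfx
    have hxS : x ∈ S := ⟨hxm, hfx⟩
    have hNeBot : (𝓝[S \ {x}] x).NeBot := ⟨fun hbot => hiso ⟨hxS, hbot⟩⟩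
    have h1 : Tendsto (slope f x) (𝓝[S \ {x}] x) (𝓝 (f' x)) :=
      (hasDerivAt_iff_tendsto_slope.1 (hder hxm)).mono_left
        (nhdsWithin_mono x (fun y hy => hy.2))
    have h2 : Tendsto (slope f x) (𝓝[S \ {x}] x) (𝓝 0) := by
      apply Tendsto.congr' _ tendsto_const_nhds
      filter_upwards [self_mem_nhdsWithin] with y hy
      rw [slope_def_field, hy.1.2, hfx]
      simp
    exact tendsto_nhds_unique h1 h2
  -- the main a.e. inequality
  have hmain : ∀ᵐ x, x ∈ Ioo a b → F' |f x| * |f' x| ≤ d x := by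
    filter_upwards [hdD, hgD, hS] with x hdx hgx hSx hxm
    by_cases hfx : f x = 0
    · rw [hfx, hSx hxm hfx]
      simp only [abs_zero, mul_zero]
      exact ENNReal.toReal_nonneg
    · have hfpos : 0 < |f x| := abs_pos.2 hfx
      have hxIcc : x ∈ Icc a b := Ioo_subset_Icc_self hxm
      have hgpos : 0 < g x := lt_of_lt_of_le hfpos (hfg x hxIcc)
      have hd1 : HasDerivAt (fun y => F (g y)) (F' (g x) * ψ x) x :=
        (hFderiv (g x) hgpos).comp x hgx
      have heq : h =ᶠ[𝓝 x] (fun y => F (g y)) := by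
        filter_upwards [Ioi_mem_nhds hxm.1] with y (hy : a < y)
        rw [hhdef]
        simp only [max_eq_left hy.le]
      have hd2 : HasDerivAt h (F' (g x) * ψ x) x := hd1.congr_of_eventuallyEq heq
      have hdx' : d x = F' (g x) * ψ x := hdx.unique hd2
      have hψx : ψ x = |f' x| := Set.indicator_of_mem hxIcc _
      rw [hdx', hψx]
      exact mul_le_mul_of_nonneg_right (hF'mono _ _ hfpos (hfg x hxIcc)) (abs_nonneg _)
  -- integrability of the left-hand integrand
  have hfc : Continuous (fun y => ∫ t in a..y, φ t) :=
    intervalIntegral.continuous_primitive (fun u v => hφint.intervalIntegrable) a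
  set T : Set ℝ := {y | (∫ t in a..y, φ t) ≠ 0} with hTdef
  have hTopen : IsOpen T := isOpen_compl_singleton.preimage hfc
  have habs : AEStronglyMeasurable (fun x => |f' x|) (volume.restrict (Ioc a b)) := by
    have := hf'Ioc.aestronglyMeasurable.norm
    simpa only [Real.norm_eq_abs] using this
  set Φ : ℝ → ℝ := fun x => (T.indicator (fun y => F' |∫ t in a..y, φ t|) x) * |f' x| with hΦdef
  have hΦmeas : AEStronglyMeasurable Φ (volume.restrict (Ioc a b)) := by
    apply AEStronglyMeasurable.mul _ habs
    apply AEStronglyMeasurable.restrict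
    rw [aestronglyMeasurable_indicator_iff hTopen.measurableSet]
    apply ContinuousOn.aestronglyMeasurable _ hTopen.measurableSet
    apply hF'cont.comp ((continuous_abs.comp hfc).continuousOn)
    intro y hy
    exact abs_pos.2 hy
  have hrestr : volume.restrict (Ioo a b) = volume.restrict (Ioc a b) :=
    Measure.restrict_congr_set Ioo_ae_eq_Ioc
  have hLHSae : (fun x => F' |f x| * |f' x|) =ᵐ[volume.restrict (Ioc a b)] Φ := by
    rw [← hrestr, EventuallyEq, ae_restrict_iff' measurableSet_Ioo]
    filter_upwards [hS] with x hSx hxm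
    have hxIcc : x ∈ Icc a b := Ioo_subset_Icc_self hxm
    by_cases hfx : f x = 0
    · have hf0 : f' x = 0 := hSx hxm hfx
      simp [hΦdef, hf0]
    · have hfeqx : (∫ t in a..x, φ t) = f x := (hfeq x hxIcc).symm
      have hxT : x ∈ T := by
        rw [hTdef, mem_setOf_eq, hfeqx]
        exact hfx
      rw [hΦdef]
      simp only [Set.indicator_of_mem hxT, hfeqx]
  have hB : ∀ x ∈ Icc a b, |f x| ≤ g b :=
    fun x hx => le_trans (hfg x hx) (hgmono hx.2)
  have hLHSint : IntervalIntegrable (fun x => F' |f x| * |f' x|) volume a b := by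
    rw [intervalIntegrable_iff_integrableOn_Ioc_of_le hab']
    have hgbpos : 0 < g b + 1 := by
      have := hgnn b hab'
      linarith
    apply Integrable.mono' ((hf'Ioc.abs).const_mul (F' (g b + 1)))
      (hΦmeas.congr hLHSae.symm)
    rw [← hrestr, ae_restrict_iff' measurableSet_Ioo]
    filter_upwards [hS] with x hSx hxm
    have hxIcc : x ∈ Icc a b := Ioo_subset_Icc_self hxm
    by_cases hfx : f x = 0
    · have hf0 : f' x = 0 := hSx hxm hfx
      simp [hf0]
    · have hfpos : 0 < |f x| := abs_pos.2 hfx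
      rw [Real.norm_eq_abs, abs_mul, abs_abs,
        abs_of_nonneg (hF'nonneg _ hfpos)]
      apply mul_le_mul_of_nonneg_right _ (abs_nonneg _)
      exact hF'mono _ _ hfpos (by linarith [hB x hxIcc])
  -- putting everything together
  have step1 : ∫ x in a..b, F' |f x| * |f' x| = ∫ x in Ioo a b, F' |f x| * |f' x| := by
    rw [intervalIntegral.integral_of_le hab', ← hrestr]
  have hLHSintOn : IntegrableOn (fun x => F' |f x| * |f' x|) (Ioo a b) :=
    ((intervalIntegrable_iff_integrableOn_Ioc_of_le hab').1 hLHSint).mono_set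
      Ioo_subset_Ioc_self
  have step2 : ∫ x in Ioo a b, F' |f x| * |f' x| ≤ ∫ x in Ioo a b, d x := by
    apply integral_mono_ae hLHSintOn hdint
    exact (ae_restrict_iff' measurableSet_Ioo).2 hmain
  have hhb : h b = F (g b) := by
    rw [hhdef]
    simp only [max_eq_left hab']
  have hha : h a = 0 := by
    rw [hhdef]
    simp only [max_self, hga, hF0]
  rw [step1, ← hgb]
  have := hdle
  rw [hhb, hha] at this
  linarith [step2]
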